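/- Let r and k be positive integers with 0 < log r < 2(k+1). Then rk/(4·log(rk)) ≤ R_ℓ(rK_2, k) ≤ 34·rk/log(rk). -/

import Mathlib

/-- The matching `rK₂` consisting of `r` pairwise disjoint edges `{2i, 2i+1}`. -/
def matchingGraph (r : ℕ) : SimpleGraph (Fin (2 * r)) :=
  SimpleGraph.fromRel (fun a b => (b : ℕ) = (a : ℕ) + 1 ∧ (a : ℕ) % 2 = 0)

/-- A colouring `c` of the edges of the complete graph on `Fin n` contains a
monochromatic copy of the graph `G`. -/
def HasMonoCopy {α β : Type*} (G : SimpleGraph α) {n : ℕ} (c : Sym2 (Fin n) → β) : Prop :=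
  ∃ (f : α → Fin n) (x : β), Function.Injective f ∧
    ∀ a b, G.Adj a b → c s(f a, f b) = x

/-- The `k`-colour list Ramsey number of a graph `G`: the least `n` for which one can
assign a list of `k` colours to each edge of `K_n` so that every colouring of the edges
from these lists contains a monochromatic copy of `G`. -/
noncomputable def listRamsey {α : Type*} (G : SimpleGraph α) (k : ℕ) : ℕ :=
  sInf { n : ℕ | ∃ L : Sym2 (Fin n) → Finset ℕ,
    (∀ e : Sym2 (Fin n), ¬ e.IsDiag → (L e).card = k) ∧
    ∀ c : Sym2 (Fin n) → ℕ, (∀ e : Sym2 (Fin n), ¬ e.IsDiag → c e ∈ L e) →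
      HasMonoCopy G c }

def RSet {α : Type*} (G : SimpleGraph α) (k : ℕ) : Set ℕ :=
  { n : ℕ | ∃ L : Sym2 (Fin n) → Finset ℕ,
    (∀ e : Sym2 (Fin n), ¬ e.IsDiag → (L e).card = k) ∧
    ∀ c : Sym2 (Fin n) → ℕ, (∀ e : Sym2 (Fin n), ¬ e.IsDiag → c e ∈ L e) →
      HasMonoCopy G c }

lemma listRamsey_eq {α : Type*} (G : SimpleGraph α) (k : ℕ) :
    listRamsey G k = sInf (RSet G k) := rfl

/-- An explicit description of a monochromatic matching of size `r`. -/
def MonoMatch {n : ℕ} (r : ℕ) (c : Sym2 (Fin n) → ℕ) : Prop :=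
  ∃ (u v : Fin r → Fin n) (x : ℕ),
    (∀ i j, u i ≠ v j) ∧ Function.Injective u ∧ Function.Injective v ∧
    (∀ i, c s(u i, v i) = x)

lemma matchingGraph_adj {r : ℕ} {a b : Fin (2*r)} :
    (matchingGraph r).Adj a b ↔ a ≠ b ∧
      (((b:ℕ) = (a:ℕ) + 1 ∧ (a:ℕ) % 2 = 0) ∨ ((a:ℕ) = (b:ℕ) + 1 ∧ (b:ℕ) % 2 = 0)) := by
  simp [matchingGraph, SimpleGraph.fromRel_adj]

lemma hasMonoCopy_iff {r n : ℕ} (c : Sym2 (Fin n) → ℕ) :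
    HasMonoCopy (matchingGraph r) c ↔ MonoMatch r c := by
  constructor
  · rintro ⟨f, x, hf, hc⟩
    refine ⟨fun i => f ⟨2*(i:ℕ), by have := i.2; omega⟩,
            fun i => f ⟨2*(i:ℕ)+1, by have := i.2; omega⟩, x, ?_, ?_, ?_, ?_⟩
    · intro i j h
      have := hf h
      simp only [Fin.mk.injEq] at this
      omega
    · intro i j h
      have := hf h
      simp only [Fin.mk.injEq] at this
      exact Fin.ext (by omega)
    · intro i j h
      have := hf h
      simp only [Fin.mk.injEq] at this
      exact Fin.ext (by omega)
    · intro i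
      have hadj : (matchingGraph r).Adj ⟨2*(i:ℕ), by have := i.2; omega⟩
          ⟨2*(i:ℕ)+1, by have := i.2; omega⟩ := by
        rw [matchingGraph_adj]
        refine ⟨?_, Or.inl ⟨rfl, by simp [Nat.mul_mod_right]⟩⟩
        intro h
        simp only [Fin.mk.injEq] at h
        omega
      exact hc _ _ hadj
  · rintro ⟨u, v, x, huv, hu, hv, hc⟩
    refine ⟨fun j => if (j:ℕ) % 2 = 0 then u ⟨(j:ℕ)/2, by have := j.2; omega⟩
                    else v ⟨(j:ℕ)/2, by have := j.2; omega⟩, x, ?_, ?_⟩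
    · intro j j' h
      simp only at h
      by_cases h1 : (j:ℕ) % 2 = 0 <;> by_cases h2 : (j':ℕ) % 2 = 0
      · rw [if_pos h1, if_pos h2] at h
        have := hu h
        simp only [Fin.mk.injEq] at this
        exact Fin.ext (by omega)
      · rw [if_pos h1, if_neg h2] at h
        exact absurd h (huv _ _)
      · rw [if_neg h1, if_pos h2] at h
        exact absurd h.symm (huv _ _)
      · rw [if_neg h1, if_neg h2] at h
        have := hv h
        simp only [Fin.mk.injEq] at this
        exact Fin.ext (by omega)
    · intro a b hadj
      rw [matchingGraph_adj] at hadj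
      obtain ⟨hne, hrel | hrel⟩ := hadj
      · obtain ⟨hb, ha⟩ := hrel
        have hb2 : (b:ℕ) % 2 ≠ 0 := by omega
        simp only
        rw [if_pos ha, if_neg hb2]
        have heq : (⟨(b:ℕ)/2, by have := b.2; omega⟩ : Fin r)
            = ⟨(a:ℕ)/2, by have := a.2; omega⟩ := by
          apply Fin.ext; show (b:ℕ)/2 = (a:ℕ)/2; omega
        rw [heq]
        exact hc _
      · obtain ⟨hb, ha⟩ := hrel
        have hb2 : (a:ℕ) % 2 ≠ 0 := by omega
        rw [Sym2.eq_swap]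
        simp only
        rw [if_pos ha, if_neg hb2]
        have heq : (⟨(a:ℕ)/2, by have := a.2; omega⟩ : Fin r)
            = ⟨(b:ℕ)/2, by have := b.2; omega⟩ := by
          apply Fin.ext; show (a:ℕ)/2 = (b:ℕ)/2; omega
        rw [heq]
        exact hc _

lemma sym2_decomp {α : Type*} (e : Sym2 α) (h : ¬ e.IsDiag) :
    ∃ p : α × α, p.1 ≠ p.2 ∧ e = s(p.1, p.2) := by
  induction e using Sym2.ind with
  | _ a b => exact ⟨(a,b), fun hab => h (Sym2.mk_isDiag_iff.mpr hab), rfl⟩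

lemma mem_self_sym2 {α : Type*} (a b : α) : a ∈ s(a,b) := by simp

lemma card_mem_sym2 {n : ℕ} (e : Sym2 (Fin n)) (h : ¬ e.IsDiag) :
    (Finset.univ.filter (fun w => w ∈ e)).card = 2 := by
  induction e using Sym2.ind with
  | _ a b =>
    have hab : a ≠ b := fun hab => h (by simp [hab])
    have : (Finset.univ.filter (fun w => w ∈ s(a,b))) = {a, b} := by
      ext w; simp [Sym2.mem_iff]
    rw [this, Finset.card_insert_of_notMem (by simp [hab]), Finset.card_singleton]

lemma monoMatch_of_disjoint_edges {n r x : ℕ} {c : Sym2 (Fin n) → ℕ}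
    (M : Finset (Sym2 (Fin n))) (hcard : M.card = r)
    (hM : ∀ e ∈ M, ¬ e.IsDiag ∧ c e = x)
    (hdisj : ∀ e ∈ M, ∀ e' ∈ M, e ≠ e' → ∀ w : Fin n, w ∈ e → w ∈ e' → False) :
    MonoMatch r c := by
  classical
  set g : Fin r → Sym2 (Fin n) := fun i => (M.equivFin.symm (Fin.cast hcard.symm i)).val with hg
  have hgM : ∀ i, g i ∈ M := fun i => (M.equivFin.symm (Fin.cast hcard.symm i)).2
  have hginj : Function.Injective g := by
    intro i j hij
    have := Subtype.ext hij
    have h3 := M.equivFin.symm.injective this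
    have h2 := congrArg Fin.val h3
    simp only [Fin.coe_cast] at h2
    exact Fin.ext h2
  have hex : ∀ i : Fin r, ∃ p : Fin n × Fin n, p.1 ≠ p.2 ∧ g i = s(p.1, p.2) :=
    fun i => sym2_decomp _ (hM _ (hgM i)).1
  choose p hp1 hp2 using hex
  refine ⟨fun i => (p i).1, fun i => (p i).2, x, ?_, ?_, ?_, ?_⟩
  · intro i j hij
    simp only at hij
    by_cases h : i = j
    · subst h; exact hp1 i hij
    · have hne : g i ≠ g j := fun hgij => h (hginj hgij)
      exact hdisj _ (hgM i) _ (hgM j) hne _ (by rw [hp2 i]; exact mem_self_sym2 _ _)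
        (by rw [hp2 j, Sym2.eq_swap]; rw [← hij]; exact mem_self_sym2 _ _)
  · intro i j hij
    simp only at hij
    by_cases h : i = j
    · exact h
    · exfalso
      have hne : g i ≠ g j := fun hgij => h (hginj hgij)
      exact hdisj _ (hgM i) _ (hgM j) hne _ (by rw [hp2 i]; exact mem_self_sym2 _ _)
        (by rw [hp2 j]; rw [← hij]; exact mem_self_sym2 _ _)
  · intro i j hij
    simp only at hij
    by_cases h : i = j
    · exact h
    · exfalso
      have hne : g i ≠ g j := fun hgij => h (hginj hgij)
      exact hdisj _ (hgM i) _ (hgM j) hne _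
        (by rw [hp2 i, Sym2.eq_swap]; exact mem_self_sym2 _ _)
        (by rw [hp2 j, Sym2.eq_swap]; rw [← hij]; exact mem_self_sym2 _ _)
  · intro i
    rw [← hp2 i]
    exact (hM _ (hgM i)).2

lemma exists_cover {n r : ℕ} (c : Sym2 (Fin n) → ℕ) (hno : ¬ MonoMatch r c) (i : ℕ) :
    ∃ V : Finset (Fin n), V.card ≤ 2*r - 2 ∧
      ∀ e : Sym2 (Fin n), ¬ e.IsDiag → c e = i → ∃ w ∈ V, w ∈ e := by
  classical
  set P : Finset (Sym2 (Fin n)) → Prop := fun M =>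
    (∀ e ∈ M, ¬ e.IsDiag ∧ c e = i) ∧
    (∀ e ∈ M, ∀ e' ∈ M, e ≠ e' → ∀ w : Fin n, w ∈ e → w ∈ e' → False) with hPdef
  have hne : (Finset.univ.filter P).Nonempty := by
    refine ⟨∅, Finset.mem_filter.mpr ⟨Finset.mem_univ _, ?_, ?_⟩⟩ <;> simp
  obtain ⟨M, hMmem, hMmax⟩ := Finset.exists_max_image _ Finset.card hne
  rw [Finset.mem_filter] at hMmem
  obtain ⟨-, hP⟩ := hMmem
  have hMr : M.card ≤ r - 1 := by
    by_contra hcon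
    push_neg at hcon
    obtain ⟨M', hsub, hcard⟩ := Finset.exists_subset_card_eq (show r ≤ M.card by omega)
    exact hno (monoMatch_of_disjoint_edges M' hcard (fun e he => hP.1 e (hsub he))
      (fun e he e' he' => hP.2 e (hsub he) e' (hsub he')))
  refine ⟨Finset.univ.filter (fun w => ∃ e ∈ M, w ∈ e), ?_, ?_⟩
  · have hsub : Finset.univ.filter (fun w => ∃ e ∈ M, w ∈ e) ⊆
        M.biUnion (fun e => Finset.univ.filter (fun w => w ∈ e)) := by
      intro w hw
      rw [Finset.mem_filter] at hw
      obtain ⟨-, e, he, hwe⟩ := hw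
      exact Finset.mem_biUnion.mpr ⟨e, he, Finset.mem_filter.mpr ⟨Finset.mem_univ _, hwe⟩⟩
    calc (Finset.univ.filter (fun w => ∃ e ∈ M, w ∈ e)).card
        ≤ (M.biUnion (fun e => Finset.univ.filter (fun w => w ∈ e))).card :=
          Finset.card_le_card hsub
      _ ≤ ∑ e ∈ M, (Finset.univ.filter (fun w => w ∈ e)).card := Finset.card_biUnion_le
      _ ≤ ∑ _e ∈ M, 2 := Finset.sum_le_sum (fun e he => by
          rw [card_mem_sym2 e (hP.1 e he).1])
      _ = 2 * M.card := by rw [Finset.sum_const, smul_eq_mul, mul_comm]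
      _ ≤ 2*r - 2 := by omega
  · intro e hed hcol
    by_contra hcov
    push_neg at hcov
    simp only [Finset.mem_filter, Finset.mem_univ, true_and] at hcov
    have heM : e ∉ M := by
      intro heM
      obtain ⟨q, hq1, hq2⟩ := sym2_decomp e hed
      exact hcov q.1 ⟨e, heM, by rw [hq2]; exact mem_self_sym2 _ _⟩ (by rw [hq2]; exact mem_self_sym2 _ _)
    have hPM' : P (insert e M) := by
      constructor
      · intro e' he'
        rcases Finset.mem_insert.mp he' with h | h
        · exact h ▸ ⟨hed, hcol⟩
        · exact hP.1 e' h
      · intro e1 he1 e2 he2 hne12 w hw1 hw2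
        rcases Finset.mem_insert.mp he1 with h1 | h1 <;>
          rcases Finset.mem_insert.mp he2 with h2 | h2
        · exact hne12 (h1.trans h2.symm)
        · exact hcov w ⟨e2, h2, hw2⟩ (h1 ▸ hw1)
        · exact hcov w ⟨e1, h1, hw1⟩ (h2 ▸ hw2)
        · exact hP.2 e1 h1 e2 h2 hne12 w hw1 hw2
    have := hMmax (insert e M) (Finset.mem_filter.mpr ⟨Finset.mem_univ _, hPM'⟩)
    rw [Finset.card_insert_of_notMem heM] at this
    omega

lemma det_mem (r k : ℕ) (hr : 2 ≤ r) (hk : 1 ≤ k) :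
    2*(r-1)*k + 2 ∈ RSet (matchingGraph r) k := by
  classical
  refine ⟨fun _ => Finset.range k, fun _ _ => Finset.card_range k, ?_⟩
  intro c hc
  rw [hasMonoCopy_iff]
  by_contra hno
  choose V hVcard hVcov using exists_cover c hno
  set U : Finset (Fin (2*(r-1)*k + 2)) := (Finset.range k).biUnion V with hU
  have hUcard : U.card ≤ 2*(r-1)*k := by
    calc U.card ≤ ∑ i ∈ Finset.range k, (V i).card := Finset.card_biUnion_le
      _ ≤ ∑ _i ∈ Finset.range k, (2*r-2) := Finset.sum_le_sum (fun i _ => hVcard i)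
      _ = k * (2*r-2) := by rw [Finset.sum_const, smul_eq_mul, Finset.card_range]
      _ = 2*(r-1)*k := by
          have h2 : 2*r-2 = 2*(r-1) := by omega
          rw [h2, mul_comm]
  have hcard2 : 2 ≤ (Finset.univ \ U).card := by
    rw [Finset.card_sdiff_of_subset (Finset.subset_univ U), Finset.card_univ, Fintype.card_fin]
    omega
  obtain ⟨a, ha, b, hb, hab⟩ :=
    Finset.one_lt_card.mp (show 1 < (Finset.univ \ U).card by omega)
  have hand : ¬ (s(a,b) : Sym2 _).IsDiag := by simp [Sym2.mk_isDiag_iff, hab]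
  have hci := hc s(a,b) hand
  obtain ⟨w, hwV, hwe⟩ := hVcov (c s(a,b)) s(a,b) hand rfl
  have hwU : w ∈ U := Finset.mem_biUnion.mpr ⟨c s(a,b), hci, hwV⟩
  rcases Sym2.mem_iff.mp hwe with h | h
  · subst h; exact (Finset.mem_sdiff.mp ha).2 hwU
  · subst h; exact (Finset.mem_sdiff.mp hb).2 hwU

lemma card_pi_filter {ι : Type*} [Fintype ι] [DecidableEq ι] {β : Type*} [Fintype β]
    [DecidableEq β] (p : ι → β → Prop) [∀ i b, Decidable (p i b)] :
    (Finset.univ.filter (fun F : ι → β => ∀ i, p i (F i))).card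
      = ∏ i, (Finset.univ.filter (fun b => p i b)).card := by
  rw [← Fintype.card_subtype]
  rw [Fintype.card_congr (Equiv.subtypePiEquivPi (p := p))]
  rw [Fintype.card_pi]
  exact Finset.prod_congr rfl (fun i _ => Fintype.card_subtype _)

lemma two_le_exp_half : Real.exp 0.5 ≤ 2 := by
  have h1 : Real.exp 0.5 * Real.exp 0.5 = Real.exp 1 := by
    rw [← Real.exp_add]; norm_num
  nlinarith [Real.exp_pos (0.5:ℝ), Real.exp_one_lt_d9]

lemma half_le_log_two : (0.5:ℝ) ≤ Real.log 2 :=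
  (Real.le_log_iff_exp_le (by norm_num)).mpr two_le_exp_half

set_option maxHeartbeats 1200000 in
lemma lower_aux (r k : ℕ) (hr : 2 ≤ r) (hk : 1 ≤ k) (n : ℕ)
    (hn : (n:ℝ) < (r:ℝ)*k/(4*Real.log ((r:ℝ)*k))) :
    n ∉ RSet (matchingGraph r) k := by
  classical
  rintro ⟨L, hL, hforce⟩
  by_cases hsmall : n < 2*r
  · set c : Sym2 (Fin n) → ℕ := fun e => if h : (L e).Nonempty then (L e).min' h else 0 with hc
    have hmem : ∀ e : Sym2 (Fin n), ¬ e.IsDiag → c e ∈ L e := by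
      intro e he
      have hne : (L e).Nonempty := Finset.card_pos.mp (by rw [hL e he]; omega)
      simp only [hc, dif_pos hne]
      exact (L e).min'_mem hne
    obtain ⟨f, x, hf, -⟩ := hforce c hmem
    have := Fintype.card_le_of_injective f hf
    simp only [Fintype.card_fin] at this
    omega
  push_neg at hsmall
  have hn4 : 4 ≤ n := by omega
  have hrkpos : (0:ℝ) < (r:ℝ)*k := by positivity
  have hrk2 : (2:ℝ) ≤ (r:ℝ)*k := by
    have h1 : (2:ℝ) ≤ (r:ℝ) := by exact_mod_cast hr
    have h2 : (1:ℝ) ≤ (k:ℝ) := by exact_mod_cast hk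
    nlinarith
  have hΛ : (0.5:ℝ) ≤ Real.log ((r:ℝ)*k) :=
    half_le_log_two.trans (Real.log_le_log (by norm_num) hrk2)
  have hΛpos : (0:ℝ) < Real.log ((r:ℝ)*k) := by linarith
  have hn_rk : (n:ℝ) ≤ (r:ℝ)*k := by
    have h2 : (r:ℝ)*k/(4*Real.log ((r:ℝ)*k)) ≤ (r:ℝ)*k/2 := by
      apply div_le_div_of_nonneg_left (le_of_lt hrkpos) (by norm_num) (by linarith)
    nlinarith
  have hnlogn : (n:ℝ) * Real.log n < ((r:ℝ)-1) * k := by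
    have hlogn : Real.log n ≤ Real.log ((r:ℝ)*k) :=
      Real.log_le_log (by positivity) hn_rk
    have h1 : (n:ℝ) * Real.log n ≤ (n:ℝ) * Real.log ((r:ℝ)*k) :=
      mul_le_mul_of_nonneg_left hlogn (by positivity)
    have h2 : (n:ℝ) * (4*Real.log ((r:ℝ)*k)) < (r:ℝ)*k := by
      rw [← lt_div_iff₀ (by positivity)]
      exact hn
    have hr2 : (2:ℝ) ≤ (r:ℝ) := by exact_mod_cast hr
    have hk1 : (1:ℝ) ≤ (k:ℝ) := by exact_mod_cast hk
    nlinarith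
  set s := r - 1 with hs
  set T : Finset ℕ := Finset.univ.biUnion L with hT
  have hLT : ∀ e : Sym2 (Fin n), L e ⊆ T := fun e x hx =>
    Finset.mem_biUnion.mpr ⟨e, Finset.mem_univ _, hx⟩
  have hkT : k ≤ T.card := by
    have hnd : ¬ (s((⟨0, by omega⟩ : Fin n), (⟨1, by omega⟩ : Fin n))).IsDiag := by
      simp only [Sym2.mk_isDiag_iff]
      intro h
      simp only [Fin.mk.injEq] at h
      omega
    calc k = (L s((⟨0, by omega⟩ : Fin n), (⟨1, by omega⟩ : Fin n))).card := (hL _ hnd).symm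
      _ ≤ T.card := Finset.card_le_card (hLT _)
  have hgood : ∃ F : {x // x ∈ T} → Fin s → Fin n,
      ∀ e : Sym2 (Fin n), ¬ e.IsDiag → ∃ a : {x // x ∈ T}, (a:ℕ) ∈ L e ∧ ∃ i, F a i ∈ e := by
    by_contra hno
    push_neg at hno
    set ND : Finset (Sym2 (Fin n)) := Finset.univ.filter (fun e => ¬ e.IsDiag) with hND
    set Bad : Sym2 (Fin n) → Finset ({x // x ∈ T} → Fin s → Fin n) := fun e =>
      Finset.univ.filter (fun F => ∀ a : {x // x ∈ T}, (a:ℕ) ∈ L e → ∀ i, F a i ∉ e) with hBad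
    have hsub : (Finset.univ : Finset ({x // x ∈ T} → Fin s → Fin n)) ⊆ ND.biUnion Bad := by
      intro F _
      obtain ⟨e, hed, hbad⟩ := hno F
      exact Finset.mem_biUnion.mpr ⟨e, Finset.mem_filter.mpr ⟨Finset.mem_univ _, hed⟩,
        Finset.mem_filter.mpr ⟨Finset.mem_univ _, hbad⟩⟩
    have hper : ∀ e ∈ ND, (Bad e).card = ((n-2)^s)^k * (n^s)^(T.card - k) := by
      intro e hemem
      have hed : ¬ e.IsDiag := (Finset.mem_filter.mp hemem).2
      rw [hBad]
      rw [card_pi_filter (fun (a : {x // x ∈ T}) (g : Fin s → Fin n) =>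
        (a:ℕ) ∈ L e → ∀ i, g i ∉ e)]
      have hpera : ∀ a : {x // x ∈ T},
          (Finset.univ.filter (fun g : Fin s → Fin n => (a:ℕ) ∈ L e → ∀ i, g i ∉ e)).card
          = if (a:ℕ) ∈ L e then (n-2)^s else n^s := by
        intro a
        by_cases ha : (a:ℕ) ∈ L e
        · rw [if_pos ha]
          have heq : (Finset.univ.filter (fun g : Fin s → Fin n => (a:ℕ) ∈ L e → ∀ i, g i ∉ e))
              = Finset.univ.filter (fun g : Fin s → Fin n => ∀ i, g i ∉ e) := by
            apply Finset.filter_congr; intro g _; simp [ha]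
          have hw : (Finset.univ.filter (fun w : Fin n => ¬ w ∈ e)).card = n - 2 := by
            have hpn := Finset.card_filter_add_card_filter_not
              (s := (Finset.univ : Finset (Fin n))) (p := fun w => w ∈ e)
            rw [card_mem_sym2 e hed, Finset.card_univ, Fintype.card_fin] at hpn
            omega
          have hcpf := card_pi_filter (fun (_ : Fin s) (w : Fin n) => ¬ w ∈ e)
          beta_reduce at hcpf
          rw [hw, Finset.prod_const, Finset.card_univ, Fintype.card_fin] at hcpf
          rw [heq]
          convert hcpf using 2
          ext g
          simp
        · rw [if_neg ha]
          have heq : (Finset.univ.filter (fun g : Fin s → Fin n => (a:ℕ) ∈ L e → ∀ i, g i ∉ e))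
              = Finset.univ := by
            apply Finset.filter_true_of_mem; intro g _; exact fun h => absurd h ha
          rw [heq, Finset.card_univ, Fintype.card_fun, Fintype.card_fin, Fintype.card_fin]
      rw [Finset.prod_congr rfl (fun a _ => hpera a)]
      rw [Finset.prod_ite, Finset.prod_const, Finset.prod_const]
      have hA : (Finset.univ.filter (fun a : {x // x ∈ T} => (a:ℕ) ∈ L e)).card = k := by
        rw [← hL e hed]
        refine Finset.card_bij (fun a _ => (a:ℕ)) ?_ ?_ ?_
        · intro a ha; exact (Finset.mem_filter.mp ha).2
        · intro a _ b _ hab; exact Subtype.ext hab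
        · intro b hb; exact ⟨⟨b, hLT e hb⟩, Finset.mem_filter.mpr ⟨Finset.mem_univ _, hb⟩, rfl⟩
      have hB : (Finset.univ.filter (fun a : {x // x ∈ T} => ¬ (a:ℕ) ∈ L e)).card
          = T.card - k := by
        have hpn := Finset.card_filter_add_card_filter_not
          (s := (Finset.univ : Finset {x // x ∈ T})) (p := fun a => (a:ℕ) ∈ L e)
        rw [hA, Finset.card_univ, Fintype.card_coe] at hpn
        omega
      rw [hA, hB]
    have htot : ((n^s)^T.card : ℕ) ≤ n*n * (((n-2)^s)^k * (n^s)^(T.card - k)) := by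
      have h1 := Finset.card_le_card hsub
      have h2 := Finset.card_biUnion_le (s := ND) (t := Bad)
      have h3 : ∑ e ∈ ND, (Bad e).card = ND.card * (((n-2)^s)^k * (n^s)^(T.card - k)) := by
        rw [Finset.sum_congr rfl hper, Finset.sum_const, smul_eq_mul]
      have hNDle : ND.card ≤ n*n := by
        have h4 : ND.card ≤ Fintype.card (Sym2 (Fin n)) := Finset.card_le_univ ND
        have h5 : Fintype.card (Sym2 (Fin n)) ≤ Fintype.card (Fin n × Fin n) := by
          apply Fintype.card_le_of_surjective (fun p : Fin n × Fin n => s(p.1, p.2))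
          intro e
          induction e using Sym2.ind with
          | _ a b => exact ⟨(a,b), rfl⟩
        have h6 := h4.trans h5
        simpa [Fintype.card_prod, Fintype.card_fin] using h6
      have hcardL : (Finset.univ : Finset ({x // x ∈ T} → Fin s → Fin n)).card
          = (n^s)^T.card := by
        rw [Finset.card_univ, Fintype.card_fun, Fintype.card_fun, Fintype.card_fin,
          Fintype.card_fin, Fintype.card_coe]
      calc (n^s)^T.card = (Finset.univ : Finset ({x // x ∈ T} → Fin s → Fin n)).card :=
            hcardL.symm
        _ ≤ (ND.biUnion Bad).card := h1
        _ ≤ ∑ e ∈ ND, (Bad e).card := h2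
        _ = ND.card * (((n-2)^s)^k * (n^s)^(T.card - k)) := h3
        _ ≤ n*n * (((n-2)^s)^k * (n^s)^(T.card - k)) := Nat.mul_le_mul_right _ hNDle
    -- pass to the reals and contradict
    have hw2 : ((n-2 : ℕ):ℝ) = (n:ℝ) - 2 := by
      have h2 : 2 ≤ n := by omega
      rw [Nat.cast_sub h2]
      norm_num
    have hcast : ((n:ℝ)^s)^T.card
        ≤ (n:ℝ)*n * ((((n:ℝ)-2)^s)^k * ((n:ℝ)^s)^(T.card - k)) := by
      have h7 := (Nat.cast_le (α := ℝ)).mpr htot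
      push_cast at h7
      rw [hw2] at h7
      exact h7
    have hpowpos : (0:ℝ) < ((n:ℝ)^s)^(T.card - k) := by positivity
    have hsplit : ((n:ℝ)^s)^T.card = ((n:ℝ)^s)^k * ((n:ℝ)^s)^(T.card - k) := by
      rw [← pow_add]; congr 1; omega
    have hmain : (n:ℝ)^(s*k) ≤ (n:ℝ)*n * ((n:ℝ)-2)^(s*k) := by
      have h7 := hcast
      rw [hsplit] at h7
      rw [show (n:ℝ)*n * ((((n:ℝ)-2)^s)^k * ((n:ℝ)^s)^(T.card - k))
          = ((n:ℝ)*n * (((n:ℝ)-2)^s)^k) * ((n:ℝ)^s)^(T.card - k) from by ring] at h7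
      have h8 := (mul_le_mul_iff_of_pos_right hpowpos).mp h7
      rw [← pow_mul, ← pow_mul] at h8
      exact h8
    have hcontr : (n:ℝ)*n * ((n:ℝ)-2)^(s*k) < (n:ℝ)^(s*k) := by
      have hn0 : (0:ℝ) < (n:ℝ) := by positivity
      have hn2 : (2:ℝ) ≤ (n:ℝ) := by exact_mod_cast (by omega : 2 ≤ n)
      have hfac : ((n:ℝ)-2) = (n:ℝ) * (1 - 2/(n:ℝ)) := by field_simp
      have h9 : (1 - 2/(n:ℝ)) ≤ Real.exp (-(2/(n:ℝ))) := by
        have := Real.add_one_le_exp (-(2/(n:ℝ))); linarith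
      have h9' : (0:ℝ) ≤ 1 - 2/(n:ℝ) := by
        rw [sub_nonneg, div_le_one hn0]; exact hn2
      have h10 : (1 - 2/(n:ℝ))^(s*k) ≤ Real.exp (-(2/(n:ℝ)))^(s*k) :=
        pow_le_pow_left₀ h9' h9 _
      rw [← Real.exp_nat_mul] at h10
      have h11 : (n:ℝ)*n = Real.exp (Real.log n + Real.log n) := by
        rw [Real.exp_add, Real.exp_log hn0]
      have h12 : Real.log n + Real.log n + (s*k : ℕ) * (-(2/(n:ℝ))) < 0 := by
        have hsk : ((s*k : ℕ):ℝ) = ((r:ℝ)-1)*k := by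
          have h13 : ((s:ℕ):ℝ) = (r:ℝ) - 1 := by
            rw [hs]; push_cast [Nat.cast_sub (by omega : 1 ≤ r)]; ring
          push_cast
          rw [h13]
        rw [hsk]
        have hlog4 : (0:ℝ) < Real.log n := Real.log_pos (by exact_mod_cast (by omega : 1 < n))
        have h14 : (n:ℝ) * Real.log n < ((r:ℝ)-1)*k := hnlogn
        rw [show Real.log ↑n + Real.log ↑n + ((r:ℝ)-1)*k * (-(2/(n:ℝ)))
            = 2*Real.log n - 2*(((r:ℝ)-1)*k)/n from by ring]
        rw [sub_neg]
        rw [lt_div_iff₀ hn0]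
        nlinarith
      calc (n:ℝ)*n * ((n:ℝ)-2)^(s*k)
          = (n:ℝ)^(s*k) * ((n:ℝ)*n * (1 - 2/(n:ℝ))^(s*k)) := by
            rw [hfac, mul_pow]; ring
        _ ≤ (n:ℝ)^(s*k) * ((n:ℝ)*n * Real.exp ((s*k : ℕ) * (-(2/(n:ℝ))))) := by
            apply mul_le_mul_of_nonneg_left _ (by positivity)
            apply mul_le_mul_of_nonneg_left h10 (by positivity)
        _ = (n:ℝ)^(s*k) * Real.exp (Real.log n + Real.log n + (s*k : ℕ) * (-(2/(n:ℝ)))) := by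
            rw [h11, ← Real.exp_add]
        _ < (n:ℝ)^(s*k) * 1 := by
            apply mul_lt_mul_of_pos_left _ (by positivity)
            rw [← Real.exp_zero]
            exact Real.exp_lt_exp.mpr h12
        _ = (n:ℝ)^(s*k) := by ring
    linarith
  obtain ⟨F, hF⟩ := hgood
  have hnpos : 0 < n := by omega
  set F' : ℕ → Fin s → Fin n := fun a =>
    if h : a ∈ T then F ⟨a, h⟩ else fun _ => ⟨0, hnpos⟩ with hF'
  have hF'T : ∀ (a : {x // x ∈ T}), F' (a:ℕ) = F a := by
    intro a
    simp only [hF', dif_pos a.2]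
  have hexn : ∀ e : Sym2 (Fin n), ¬ e.IsDiag → ∃ a, a ∈ L e ∧ ∃ i, F' a i ∈ e := by
    intro e he
    obtain ⟨a, ha, i, hi⟩ := hF e he
    exact ⟨(a:ℕ), ha, i, by rwa [hF'T]⟩
  set c : Sym2 (Fin n) → ℕ := fun e =>
    if h : ∃ a, a ∈ L e ∧ ∃ i, F' a i ∈ e then h.choose else 0 with hc
  have hcmem : ∀ e, ¬ e.IsDiag → c e ∈ L e := by
    intro e he
    simp only [hc, dif_pos (hexn e he)]
    exact (hexn e he).choose_spec.1
  have hmono := hforce c hcmem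
  rw [hasMonoCopy_iff] at hmono
  obtain ⟨u, v, x, huv, hu, hv, hcol⟩ := hmono
  have hnd : ∀ j : Fin r, ¬ (s(u j, v j)).IsDiag := by
    intro j
    simp only [Sym2.mk_isDiag_iff]
    exact huv j j
  have hspec : ∀ j : Fin r, x ∈ L s(u j, v j) ∧ ∃ i, F' x i ∈ s(u j, v j) := by
    intro j
    have hx := hcol j
    have hcj : c s(u j, v j) = (hexn _ (hnd j)).choose := by
      simp only [hc, dif_pos (hexn _ (hnd j))]
    rw [hcj] at hx
    rw [← hx]
    exact (hexn _ (hnd j)).choose_spec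
  choose hmem2 hhit using hspec
  choose I hI using hhit
  have hcard : Fintype.card (Fin s) < Fintype.card (Fin r) := by
    simp only [Fintype.card_fin]
    omega
  obtain ⟨j, j', hjj, hIeq⟩ := Fintype.exists_ne_map_eq_of_card_lt I hcard
  have h1 := hI j
  have h2 := hI j'
  rw [hIeq] at h1
  rcases Sym2.mem_iff.mp h1 with hh1 | hh1 <;> rcases Sym2.mem_iff.mp h2 with hh2 | hh2
  · exact hjj (hu (hh1.symm.trans hh2))
  · exact huv j j' (hh1.symm.trans hh2)
  · exact huv j' j (hh2.symm.trans hh1)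
  · exact hjj (hv (hh1.symm.trans hh2))
section ProbSetup
open Finset

def CoverFam (n m s2 : ℕ) : Type := Fin m → {V : Finset (Fin n) // V.card ≤ s2}

noncomputable instance (n m s2 : ℕ) : Fintype (CoverFam n m s2) := by
  unfold CoverFam
  classical
  infer_instance

def KSets (m k : ℕ) : Type := {s : Finset (Fin m) // s.card = k}

instance (m k : ℕ) : Fintype (KSets m k) := by
  unfold KSets; infer_instance

lemma card_KSets (m k : ℕ) : Fintype.card (KSets m k) = m.choose k := by
  unfold KSets
  rw [show @Fintype.card {s : Finset (Fin m) // s.card = k} (instFintypeKSets m k)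
      = Fintype.card {s : Finset (Fin m) // s.card = k} from Fintype.card_congr (Equiv.refl _)]
  rw [Fintype.card_subtype]
  rw [show (Finset.univ.filter (fun sset : Finset (Fin m) => sset.card = k))
      = Finset.univ.powersetCard k from by
    ext sset; simp [Finset.mem_powersetCard_univ]]
  rw [Finset.card_powersetCard, Finset.card_univ, Fintype.card_fin]

def famDeg {n m s2 : ℕ} (𝒱 : CoverFam n m s2) (v : Fin n) : ℕ :=
  (Finset.univ.filter (fun i : Fin m => v ∈ (𝒱 i).val)).card

def famW {n m s2 : ℕ} (𝒱 : CoverFam n m s2) : Finset (Fin n) :=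
  Finset.univ.filter (fun v => n * famDeg 𝒱 v ≤ 2 * (m * s2))

def famEW {n m s2 : ℕ} (𝒱 : CoverFam n m s2) : Finset (Sym2 (Fin n)) :=
  (famW 𝒱).offDiag.image (fun p => s(p.1, p.2))

def famD {n m s2 : ℕ} (𝒱 : CoverFam n m s2) (e : Sym2 (Fin n)) : Finset (Fin m) := by
  classical
  exact Finset.univ.filter (fun i : Fin m => ∃ w ∈ (𝒱 i).val, w ∈ e)

lemma famDeg_sum {n m s2 : ℕ} (𝒱 : CoverFam n m s2) :
    ∑ v : Fin n, famDeg 𝒱 v ≤ m * s2 := by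
  classical
  have h1 : ∑ v : Fin n, famDeg 𝒱 v
      = ∑ i : Fin m, (Finset.univ.filter (fun v : Fin n => v ∈ (𝒱 i).val)).card := by
    simp only [famDeg, Finset.card_filter]
    rw [Finset.sum_comm]
  rw [h1]
  calc ∑ i : Fin m, (Finset.univ.filter (fun v : Fin n => v ∈ (𝒱 i).val)).card
      ≤ ∑ _i : Fin m, s2 := Finset.sum_le_sum (fun i _ => by
        calc (Finset.univ.filter (fun v : Fin n => v ∈ (𝒱 i).val)).card
            ≤ (𝒱 i).val.card := Finset.card_le_card
              (fun v hv => (Finset.mem_filter.mp hv).2)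
          _ ≤ s2 := (𝒱 i).2)
    _ = m * s2 := by rw [Finset.sum_const, Finset.card_univ, Fintype.card_fin, smul_eq_mul]

lemma famW_card {n m s2 : ℕ} (hSig : 0 < m * s2) (𝒱 : CoverFam n m s2) :
    ((n:ℝ)/2) ≤ ((famW 𝒱).card : ℝ) := by
  classical
  set B := Finset.univ.filter (fun v : Fin n => ¬ (n * famDeg 𝒱 v ≤ 2 * (m * s2))) with hB
  have hBW : (famW 𝒱).card + B.card = n := by
    have := Finset.card_filter_add_card_filter_not
      (s := (Finset.univ : Finset (Fin n)))
      (p := fun v => n * famDeg 𝒱 v ≤ 2 * (m * s2))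
    rw [Finset.card_univ, Fintype.card_fin] at this
    exact this
  have hBbound : B.card * (2*(m*s2) + 1) ≤ n * (m*s2) := by
    calc B.card * (2*(m*s2)+1) = ∑ _v ∈ B, (2*(m*s2)+1) := by
          rw [Finset.sum_const, smul_eq_mul, mul_comm]
      _ ≤ ∑ v ∈ B, n * famDeg 𝒱 v := Finset.sum_le_sum (fun v hv => by
          have := (Finset.mem_filter.mp hv).2; omega)
      _ = n * ∑ v ∈ B, famDeg 𝒱 v := by rw [Finset.mul_sum]
      _ ≤ n * ∑ v : Fin n, famDeg 𝒱 v :=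
          Nat.mul_le_mul_left _ (Finset.sum_le_sum_of_subset (Finset.subset_univ _))
      _ ≤ n * (m*s2) := Nat.mul_le_mul_left _ (famDeg_sum 𝒱)
  have hSigR : (0:ℝ) < (m*s2 : ℕ) := by exact_mod_cast hSig
  have hBreal : (B.card:ℝ) ≤ (n:ℝ)/2 := by
    have h1 : (B.card:ℝ) * (2*((m*s2:ℕ):ℝ)+1) ≤ (n:ℝ)*((m*s2:ℕ):ℝ) := by
      exact_mod_cast hBbound
    nlinarith [hSigR, (Nat.cast_nonneg B.card : (0:ℝ) ≤ B.card)]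
  have hcast : ((famW 𝒱).card:ℝ) + (B.card:ℝ) = (n:ℝ) := by exact_mod_cast hBW
  linarith

lemma famEW_facts {n m s2 : ℕ} (𝒱 : CoverFam n m s2) {e : Sym2 (Fin n)}
    (he : e ∈ famEW 𝒱) :
    ¬ e.IsDiag ∧ n * (famD 𝒱 e).card ≤ 4 * (m * s2) := by
  classical
  obtain ⟨p, hp, rfl⟩ := Finset.mem_image.mp he
  obtain ⟨hp1, hp2, hpne⟩ := Finset.mem_offDiag.mp hp
  constructor
  · simp [Sym2.mk_isDiag_iff, hpne]
  · have hsub : famD 𝒱 s(p.1,p.2) ⊆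
        (Finset.univ.filter (fun i : Fin m => p.1 ∈ (𝒱 i).val))
        ∪ (Finset.univ.filter (fun i : Fin m => p.2 ∈ (𝒱 i).val)) := by
      intro i hi
      rw [famD, Finset.mem_filter] at hi
      obtain ⟨-, w, hw1, hw2⟩ := hi
      rcases Sym2.mem_iff.mp hw2 with h | h
      · exact Finset.mem_union_left _
          (Finset.mem_filter.mpr ⟨Finset.mem_univ _, h ▸ hw1⟩)
      · exact Finset.mem_union_right _
          (Finset.mem_filter.mpr ⟨Finset.mem_univ _, h ▸ hw1⟩)
    have h1 : (famD 𝒱 s(p.1,p.2)).card ≤ famDeg 𝒱 p.1 + famDeg 𝒱 p.2 := by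
      calc (famD 𝒱 s(p.1,p.2)).card
          ≤ _ := Finset.card_le_card hsub
        _ ≤ _ := Finset.card_union_le _ _
    have hw1 := (Finset.mem_filter.mp hp1).2
    have hw2 := (Finset.mem_filter.mp hp2).2
    calc n * (famD 𝒱 s(p.1,p.2)).card ≤ n * (famDeg 𝒱 p.1 + famDeg 𝒱 p.2) :=
          Nat.mul_le_mul_left _ h1
      _ = n * famDeg 𝒱 p.1 + n * famDeg 𝒱 p.2 := by ring
      _ ≤ 4 * (m * s2) := by omega

lemma famEW_card {n m s2 : ℕ} (hSig : 0 < m * s2) (hn : 1000 ≤ n) (𝒱 : CoverFam n m s2) :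
    n*n/9 ≤ (famEW 𝒱).card := by
  classical
  have h2to1 : ((famW 𝒱).offDiag).card ≤ 2 * (famEW 𝒱).card := by
    apply Finset.card_le_mul_card_image
    intro b hb
    obtain ⟨p0, hp0, hp0e⟩ := Finset.mem_image.mp hb
    have hsub : ((famW 𝒱).offDiag.filter (fun p => s(p.1,p.2) = b))
        ⊆ {(p0.1,p0.2), (p0.2,p0.1)} := by
      intro p hp
      rw [Finset.mem_filter] at hp
      have h := hp.2
      rw [← hp0e] at h
      rcases Sym2.eq_iff.mp h with ⟨h1,h2⟩ | ⟨h1,h2⟩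
      · apply Finset.mem_insert.mpr; left
        ext <;> simp [h1, h2]
      · apply Finset.mem_insert.mpr; right
        apply Finset.mem_singleton.mpr
        ext <;> simp [h1, h2]
    calc ((famW 𝒱).offDiag.filter (fun p => s(p.1,p.2) = b)).card
        ≤ ({(p0.1,p0.2), (p0.2,p0.1)} : Finset (Fin n × Fin n)).card :=
          Finset.card_le_card hsub
      _ ≤ 2 := (Finset.card_insert_le _ _).trans (by simp)
  have hoff : ((famW 𝒱).offDiag).card = (famW 𝒱).card * (famW 𝒱).card - (famW 𝒱).card :=
    Finset.offDiag_card _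
  have hW2 : ((n:ℝ)/2) ≤ ((famW 𝒱).card:ℝ) := famW_card hSig 𝒱
  have hWn : ((famW 𝒱).card:ℝ) ≤ (n:ℝ) := by
    exact_mod_cast (Finset.card_le_univ _).trans_eq (Fintype.card_fin n)
  have hWpos : 0 < (famW 𝒱).card := by
    by_contra hcon
    push_neg at hcon
    have h0 : ((famW 𝒱).card:ℝ) = 0 := by
      have := Nat.le_zero.mp (by omega : (famW 𝒱).card ≤ 0)
      exact_mod_cast this
    have hnR' : (1000:ℝ) ≤ (n:ℝ) := by exact_mod_cast hn
    rw [h0] at hW2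
    linarith
  have hWW : (famW 𝒱).card ≤ (famW 𝒱).card * (famW 𝒱).card :=
    Nat.le_mul_of_pos_left _ hWpos
  have hoffR : (((famW 𝒱).offDiag).card : ℝ)
      = ((famW 𝒱).card:ℝ) * ((famW 𝒱).card:ℝ) - ((famW 𝒱).card:ℝ) := by
    rw [hoff, Nat.cast_sub hWW]
    push_cast
    ring
  have h2to1R : (((famW 𝒱).offDiag).card:ℝ) ≤ 2*((famEW 𝒱).card:ℝ) := by exact_mod_cast h2to1
  have hNEreal : ((n*n/9 : ℕ):ℝ) ≤ (n:ℝ)*(n:ℝ)/9 := by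
    calc ((n*n/9 : ℕ):ℝ) ≤ ((n*n:ℕ):ℝ)/((9:ℕ):ℝ) := Nat.cast_div_le
      _ = (n:ℝ)*(n:ℝ)/9 := by push_cast; ring
  have hnR : (1000:ℝ) ≤ (n:ℝ) := by exact_mod_cast hn
  have hfinal : ((n*n/9 : ℕ):ℝ) ≤ ((famEW 𝒱).card:ℝ) := by nlinarith
  exact_mod_cast hfinal

end ProbSetup

lemma badFam_card_le {n m k s2 : ℕ} (𝒱 : CoverFam n m s2)
    (q0 : ℝ) (hq00 : 0 ≤ q0) (hq01 : q0 ≤ 1)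
    (hq0 : ∀ e ∈ famEW 𝒱, ((m.choose k : ℕ):ℝ) * q0
      ≤ (((m - (famD 𝒱 e).card).choose k : ℕ) : ℝ))
    (NE : ℕ) (hNE : NE ≤ (famEW 𝒱).card) :
    ((Finset.univ.filter (fun Lf : Sym2 (Fin n) → KSets m k =>
        ∀ e, e ∈ famEW 𝒱 → ∃ i ∈ (Lf e).val, ∃ w ∈ (𝒱 i).val, w ∈ e)).card : ℝ)
      ≤ ((m.choose k : ℕ):ℝ)^(Fintype.card (Sym2 (Fin n))) * (1-q0)^NE := by
  classical
  set C : ℕ := m.choose k with hC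
  -- product formula
  have hcpf := card_pi_filter (fun (e : Sym2 (Fin n)) (sset : KSets m k) =>
    e ∈ famEW 𝒱 → ∃ i ∈ sset.val, ∃ w ∈ (𝒱 i).val, w ∈ e)
  have hprod : (Finset.univ.filter (fun Lf : Sym2 (Fin n) → KSets m k =>
        ∀ e, e ∈ famEW 𝒱 → ∃ i ∈ (Lf e).val, ∃ w ∈ (𝒱 i).val, w ∈ e)).card
      = ∏ e : Sym2 (Fin n), (Finset.univ.filter (fun sset : KSets m k =>
          e ∈ famEW 𝒱 → ∃ i ∈ sset.val, ∃ w ∈ (𝒱 i).val, w ∈ e)).card := by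
    convert hcpf using 2
    all_goals (ext Lf; simp)
  -- per-coordinate bound
  have hper : ∀ e : Sym2 (Fin n),
      ((Finset.univ.filter (fun sset : KSets m k =>
          e ∈ famEW 𝒱 → ∃ i ∈ sset.val, ∃ w ∈ (𝒱 i).val, w ∈ e)).card : ℝ)
      ≤ if e ∈ famEW 𝒱 then (C:ℝ)*(1-q0) else (C:ℝ) := by
    intro e
    by_cases he : e ∈ famEW 𝒱
    · rw [if_pos he]
      have heq1 : (Finset.univ.filter (fun sset : KSets m k =>
          e ∈ famEW 𝒱 → ∃ i ∈ sset.val, ∃ w ∈ (𝒱 i).val, w ∈ e))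
          = Finset.univ.filter (fun sset : KSets m k =>
              ∃ i ∈ sset.val, ∃ w ∈ (𝒱 i).val, w ∈ e) := by
        apply Finset.filter_congr
        intro sset _
        simp [he]
      have hpart := Finset.card_filter_add_card_filter_not
        (s := (Finset.univ : Finset (KSets m k)))
        (p := fun sset => ∃ i ∈ sset.val, ∃ w ∈ (𝒱 i).val, w ∈ e)
      rw [Finset.card_univ, card_KSets] at hpart
      have hmiss : (Finset.univ.filter (fun sset : KSets m k =>
          ¬ ∃ i ∈ sset.val, ∃ w ∈ (𝒱 i).val, w ∈ e)).card
          = (m - (famD 𝒱 e).card).choose k := by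
        have hbij : (Finset.univ.filter (fun sset : KSets m k =>
            ¬ ∃ i ∈ sset.val, ∃ w ∈ (𝒱 i).val, w ∈ e)).card
            = ((Finset.univ \ famD 𝒱 e).powersetCard k).card := by
          refine Finset.card_bij (fun sset _ => sset.val) ?_ ?_ ?_
          · intro sset hsset
            rw [Finset.mem_filter] at hsset
            obtain ⟨-, hnex⟩ := hsset
            push_neg at hnex
            rw [Finset.mem_powersetCard]
            refine ⟨?_, sset.2⟩
            intro i hi
            rw [Finset.mem_sdiff]
            refine ⟨Finset.mem_univ _, ?_⟩
            rw [famD, Finset.mem_filter]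
            push_neg
            intro _
            exact hnex i hi
          · intro a _ b _ hab; exact Subtype.ext hab
          · intro sfin hsfin
            rw [Finset.mem_powersetCard] at hsfin
            refine ⟨⟨sfin, hsfin.2⟩, ?_, rfl⟩
            apply Finset.mem_filter.mpr
            refine ⟨Finset.mem_univ _, ?_⟩
            push_neg
            intro i hi w hw
            have hmem := hsfin.1 hi
            rw [Finset.mem_sdiff, famD, Finset.mem_filter] at hmem
            push_neg at hmem
            exact hmem.2 (Finset.mem_univ _) w hw
        rw [hbij, Finset.card_powersetCard,
          Finset.card_sdiff_of_subset (Finset.subset_univ _), Finset.card_univ, Fintype.card_fin]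
      have hmissleC : (m - (famD 𝒱 e).card).choose k ≤ C := by
        rw [hC]
        exact Nat.choose_le_choose k (Nat.sub_le _ _)
      have hcnt : (Finset.univ.filter (fun sset : KSets m k =>
          e ∈ famEW 𝒱 → ∃ i ∈ sset.val, ∃ w ∈ (𝒱 i).val, w ∈ e)).card
          = C - (m - (famD 𝒱 e).card).choose k := by
        rw [heq1]
        rw [hmiss] at hpart
        exact Nat.eq_sub_of_add_eq hpart
      rw [hcnt]
      rw [Nat.cast_sub hmissleC]
      have := hq0 e he
      linarith
    · rw [if_neg he]
      have heq1 : (Finset.univ.filter (fun sset : KSets m k =>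
          e ∈ famEW 𝒱 → ∃ i ∈ sset.val, ∃ w ∈ (𝒱 i).val, w ∈ e))
          = Finset.univ := by
        apply Finset.filter_true_of_mem
        intro sset _
        exact fun h => absurd h he
      rw [heq1, Finset.card_univ, card_KSets]
  -- assemble
  have hprodR : ((Finset.univ.filter (fun Lf : Sym2 (Fin n) → KSets m k =>
        ∀ e, e ∈ famEW 𝒱 → ∃ i ∈ (Lf e).val, ∃ w ∈ (𝒱 i).val, w ∈ e)).card : ℝ)
      = ∏ e : Sym2 (Fin n), ((Finset.univ.filter (fun sset : KSets m k =>
          e ∈ famEW 𝒱 → ∃ i ∈ sset.val, ∃ w ∈ (𝒱 i).val, w ∈ e)).card : ℝ) := by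
    rw [hprod]
    push_cast
    rfl
  rw [hprodR]
  have hle1 : ∏ e : Sym2 (Fin n), ((Finset.univ.filter (fun sset : KSets m k =>
          e ∈ famEW 𝒱 → ∃ i ∈ sset.val, ∃ w ∈ (𝒱 i).val, w ∈ e)).card : ℝ)
      ≤ ∏ e : Sym2 (Fin n), (if e ∈ famEW 𝒱 then (C:ℝ)*(1-q0) else (C:ℝ)) :=
    Finset.prod_le_prod (fun e _ => by positivity) (fun e _ => hper e)
  refine hle1.trans ?_
  rw [Finset.prod_ite (fun _ => (C:ℝ)*(1-q0)) (fun _ => (C:ℝ))]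
  rw [Finset.prod_const, Finset.prod_const]
  rw [Finset.filter_univ_mem]
  have hpart2 := Finset.card_filter_add_card_filter_not
    (s := (Finset.univ : Finset (Sym2 (Fin n)))) (p := fun e => e ∈ famEW 𝒱)
  rw [Finset.card_univ] at hpart2
  have hC0 : (0:ℝ) ≤ (C:ℝ) := by positivity
  have h1q : (0:ℝ) ≤ 1 - q0 := by linarith
  calc ((C:ℝ)*(1-q0))^(famEW 𝒱).card
        * (C:ℝ)^(Finset.univ.filter (fun e : Sym2 (Fin n) => ¬ e ∈ famEW 𝒱)).card
      = (C:ℝ)^(Fintype.card (Sym2 (Fin n))) * (1-q0)^(famEW 𝒱).card := by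
        rw [mul_pow, ← hpart2]
        rw [Finset.filter_univ_mem]
        rw [pow_add]
        ring
    _ ≤ (C:ℝ)^(Fintype.card (Sym2 (Fin n))) * (1-q0)^NE := by
        apply mul_le_mul_of_nonneg_left _ (by positivity)
        exact pow_le_pow_of_le_one h1q (by linarith) hNE


lemma choose_ratio (m : ℕ) (x : ℝ) (hx0 : 0 ≤ x) (hx1 : x ≤ 1) :
    ∀ (j d : ℕ), d + j ≤ m → (d:ℝ) ≤ x * ((m:ℝ) - j + 1) →
    (m.choose j : ℝ) * (1 - x)^j ≤ ((m-d).choose j : ℝ) := by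
  intro j
  induction j with
  | zero => intro d _ _; simp
  | succ j ih =>
    intro d hdj hdx
    have hdj' : d + j ≤ m := by omega
    have hdm : d ≤ m := by omega
    have hjm : j ≤ m - d := by omega
    set a := m - d with ha
    have hacast : (a:ℝ) = (m:ℝ) - d := by
      rw [ha, Nat.cast_sub hdm]
    have hdx' : (d:ℝ) ≤ x * ((m:ℝ) - j + 1) := by
      have h1 : x * ((m:ℝ) - (j+1:ℕ) + 1) ≤ x * ((m:ℝ) - j + 1) := by
        apply mul_le_mul_of_nonneg_left _ hx0
        push_cast; linarith
      exact hdx.trans h1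
    have h2 : ((m:ℝ) - j) * (1-x) ≤ (a:ℝ) - j := by
      have h3 : (d:ℝ) ≤ x * ((m:ℝ) - j) := by
        have : x * ((m:ℝ) - (j+1:ℕ) + 1) = x * ((m:ℝ) - j) := by push_cast; ring
        rw [← this]; exact hdx
      rw [hacast]; nlinarith
    have hc1 : (m.choose (j+1) : ℝ) * ((j:ℝ)+1) = (m.choose j : ℝ) * ((m:ℝ) - j) := by
      have h := congrArg (Nat.cast : ℕ → ℝ) (Nat.choose_succ_right_eq m j)
      push_cast [Nat.cast_sub (show j ≤ m by omega)] at h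
      convert h using 2 <;> push_cast <;> ring
    have hc2 : (a.choose (j+1) : ℝ) * ((j:ℝ)+1) = (a.choose j : ℝ) * ((a:ℝ) - j) := by
      have h := congrArg (Nat.cast : ℕ → ℝ) (Nat.choose_succ_right_eq a j)
      push_cast [Nat.cast_sub hjm] at h
      convert h using 2 <;> push_cast <;> ring
    have hb2 : (0:ℝ) ≤ ((m:ℝ) - j) * (1-x) := by
      apply mul_nonneg _ (by linarith)
      have : (j:ℝ) ≤ (m:ℝ) := by exact_mod_cast (by omega : j ≤ m)
      linarith
    have hstep := mul_le_mul (ih d hdj' hdx') h2 hb2 (by positivity)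
    have hj1 : (0:ℝ) < (j:ℝ)+1 := by positivity
    rw [pow_succ]
    rw [← mul_le_mul_iff_of_pos_right hj1]
    calc (m.choose (j+1):ℝ) * ((1-x)^j * (1-x)) * ((j:ℝ)+1)
        = ((m.choose (j+1):ℝ) * ((j:ℝ)+1)) * ((1-x)^j * (1-x)) := by ring
      _ = ((m.choose j:ℝ) * ((m:ℝ)-j)) * ((1-x)^j * (1-x)) := by rw [hc1]
      _ = ((m.choose j:ℝ) * (1-x)^j) * (((m:ℝ)-j) * (1-x)) := by ring
      _ ≤ (a.choose j:ℝ) * ((a:ℝ)-j) := hstep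
      _ = (a.choose (j+1):ℝ) * ((j:ℝ)+1) := hc2.symm

lemma card_small_subsets_le (n s : ℕ) :
    Fintype.card {V : Finset (Fin n) // V.card ≤ s} ≤ (n+1)^s := by
  classical
  have hinj : Function.Injective
      (fun (V : {V : Finset (Fin n) // V.card ≤ s}) (i : Fin s) => V.val.toList[(i:ℕ)]?) := by
    intro V W h
    apply Subtype.ext
    have hl : V.val.toList = W.val.toList := by
      apply List.ext_getElem?
      intro i
      by_cases hi : i < s
      · exact congrFun h ⟨i, hi⟩
      · rw [List.getElem?_eq_none_iff.mpr, List.getElem?_eq_none_iff.mpr]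
        · calc W.val.toList.length = W.val.card := Finset.length_toList _
            _ ≤ s := W.2
            _ ≤ i := by omega
        · calc V.val.toList.length = V.val.card := Finset.length_toList _
            _ ≤ s := V.2
            _ ≤ i := by omega
    calc V.val = V.val.toList.toFinset := (Finset.toList_toFinset _).symm
      _ = W.val.toList.toFinset := by rw [hl]
      _ = W.val := Finset.toList_toFinset _
  calc Fintype.card {V : Finset (Fin n) // V.card ≤ s}
      ≤ Fintype.card (Fin s → Option (Fin n)) := Fintype.card_le_of_injective _ hinj
    _ = (n+1)^s := by
        rw [Fintype.card_fun, Fintype.card_option, Fintype.card_fin, Fintype.card_fin]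

lemma exp_numeric_aux : (3.598:ℝ) ≤ Real.exp 1.31404 := by
  have hsum := Real.sum_le_exp_of_nonneg (show (0:ℝ) ≤ 1.31404 by norm_num) 6
  simp only [Finset.sum_range_succ, Finset.sum_range_zero, Nat.factorial] at hsum
  norm_num at hsum
  nlinarith [hsum]

lemma one_sub_ge_exp {y : ℝ} (h0 : 0 ≤ y) (h1 : y ≤ 0.722) :
    Real.exp (-(1.82*y)) ≤ 1 - y := by
  have hb : Real.exp (-(1.31404:ℝ)) ≤ 0.278 := by
    rw [Real.exp_neg]
    rw [inv_le_comm₀ (Real.exp_pos _) (by norm_num)]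
    calc (0.278:ℝ)⁻¹ ≤ 3.598 := by norm_num
      _ ≤ Real.exp 1.31404 := exp_numeric_aux
  set t : ℝ := y / 0.722 with ht
  have ht0 : 0 ≤ t := by positivity
  have ht1 : t ≤ 1 := by rw [ht, div_le_one (by norm_num)]; linarith
  have hcvx := convexOn_exp.2 (Set.mem_univ (-(1.31404:ℝ))) (Set.mem_univ (0:ℝ))
      ht0 (by linarith : (0:ℝ) ≤ 1 - t) (by ring)
  simp only [smul_eq_mul, mul_zero, add_zero, Real.exp_zero, mul_one] at hcvx
  have harg : t * -(1.31404:ℝ) = -(1.82*y) := by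
    rw [ht]; field_simp; ring
  rw [harg] at hcvx
  have hty : t * 0.722 = y := by rw [ht]; field_simp
  nlinarith [hcvx, hb, ht0, mul_le_mul_of_nonneg_left hb ht0]

lemma log_le_third {k : ℕ} (hk : 7 ≤ k) : Real.log k ≤ (k:ℝ)/3 := by
  have hk7 : (7:ℝ) ≤ (k:ℝ) := by exact_mod_cast hk
  have hlog7 : Real.log 7 ≤ 2 := by
    rw [Real.log_le_iff_le_exp (by norm_num)]
    have h1 : Real.exp 1 ^ 2 = Real.exp 2 := by
      rw [← Real.exp_nat_mul]; norm_num
    nlinarith [Real.exp_one_gt_d9]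
  have hdiv : Real.log ((k:ℝ)/7) ≤ (k:ℝ)/7 - 1 :=
    Real.log_le_sub_one_of_pos (by positivity)
  have hsplit : Real.log (k:ℝ) = Real.log 7 + Real.log ((k:ℝ)/7) := by
    rw [← Real.log_mul (by norm_num) (by positivity)]
    congr 1
    field_simp
  rw [hsplit]
  linarith

lemma final_numeric {L : ℝ} (hL : 17 < L) :
    12 * L^2 * (L+1) < 114 * Real.exp (0.4845*L) := by
  have hL0 : (0:ℝ) < L := by linarith
  have hy0 : (0:ℝ) ≤ 0.4845*L := by nlinarith
  have hsum := Real.sum_le_exp_of_nonneg hy0 9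
  simp only [Finset.sum_range_succ, Finset.sum_range_zero, Nat.factorial] at hsum
  norm_num at hsum
  have hA : (0.4845:ℝ)^7 * L^7 / 5040 + (0.4845:ℝ)^8 * L^8 / 40320
      ≤ Real.exp (0.4845*L) := by
    have e7 : ((0.4845:ℝ)*L)^7 = (0.4845:ℝ)^7 * L^7 := by rw [mul_pow]
    have e8 : ((0.4845:ℝ)*L)^8 = (0.4845:ℝ)^8 * L^8 := by rw [mul_pow]
    nlinarith [hsum, pow_nonneg hy0 1, pow_nonneg hy0 2, pow_nonneg hy0 3,
      pow_nonneg hy0 4, pow_nonneg hy0 5, pow_nonneg hy0 6, e7.symm.le, e8.symm.le,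
      pow_nonneg hy0 7, pow_nonneg hy0 8]
  have h4 : (17:ℝ)^4 ≤ L^4 := pow_le_pow_left₀ (by norm_num) (le_of_lt hL) 4
  have h5 : (17:ℝ)^5 ≤ L^5 := pow_le_pow_left₀ (by norm_num) (le_of_lt hL) 5
  have hL3 : (0:ℝ) < L^3 := by positivity
  have hB7 : 17^4 * L^3 ≤ L^7 := by
    calc (17:ℝ)^4 * L^3 ≤ L^4 * L^3 := by nlinarith
      _ = L^7 := by ring
  have hB8 : 17^5 * L^3 ≤ L^8 := by
    calc (17:ℝ)^5 * L^3 ≤ L^5 * L^3 := by nlinarith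
      _ = L^8 := by ring
  have hl2 : 17 * L^2 ≤ L^3 := by nlinarith [sq_nonneg L]
  nlinarith [hA, hB7, hB8, hl2, hL3]

lemma numeric_master {R L : ℝ} (hL17 : 17 < L) (hexpL : Real.exp L = R) :
    12*R*(L+1) < Real.exp (-(0.5155*L)) * ((33.9*R/L)*(33.9*R/L)/10) := by
  have hLpos : (0:ℝ) < L := by linarith
  have hRpos : (0:ℝ) < R := by rw [← hexpL]; exact Real.exp_pos _
  have hfn := final_numeric hL17
  have h6 : 12*L^2*(L+1) < 114.921 * Real.exp (0.4845*L) := by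
    nlinarith [hfn, Real.exp_pos (0.4845*L)]
  have hRexp : R * Real.exp (-(0.5155*L)) = Real.exp (0.4845*L) := by
    rw [← hexpL, ← Real.exp_add]; congr 1; ring
  have h7 : (33.9*R/L)*(33.9*R/L)/10 = 114.921*(R/L)^2 := by
    field_simp; ring
  rw [h7]
  have h8 : Real.exp (-(0.5155*L)) * (114.921*(R/L)^2)
      = (114.921 * (R * Real.exp (-(0.5155*L)))) * R / L^2 := by
    field_simp
  rw [h8, hRexp]
  rw [lt_div_iff₀ (by positivity)]
  nlinarith [h6, hRpos, Real.exp_pos (0.4845*L), hLpos]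

set_option maxHeartbeats 2000000 in
lemma prob_in_set (r k : ℕ) (hr : 2 ≤ r) (hk7 : 7 ≤ k)
    (hL17 : 17 < Real.log ((r:ℝ)*k))
    (hLk : Real.log ((r:ℝ)*k) < 2*((k:ℝ)+1) + Real.log k) :
    ∃ N ∈ RSet (matchingGraph r) k,
      (N:ℝ) ≤ 34*((r:ℝ)*k)/Real.log ((r:ℝ)*k) := by
  classical
  have hr2R : (2:ℝ) ≤ (r:ℝ) := by exact_mod_cast hr
  have hk7R : (7:ℝ) ≤ (k:ℝ) := by exact_mod_cast hk7
  set R : ℝ := (r:ℝ)*k with hR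
  set Λ : ℝ := Real.log R with hLam
  have hRpos : (0:ℝ) < R := by rw [hR]; positivity
  have hΛpos : (0:ℝ) < Λ := by linarith
  have hexpΛ : Real.exp Λ = R := Real.exp_log hRpos
  have h2e : (2:ℝ) ≤ Real.exp 1 := by nlinarith [Real.add_one_le_exp (1:ℝ)]
  have he27 : (2.7:ℝ) ≤ Real.exp 1 := by nlinarith [Real.exp_one_gt_d9]
  have hexp17 : (131072:ℝ) ≤ Real.exp 17 := by
    have h1 : ((2:ℝ))^(17:ℕ) ≤ (Real.exp 1)^(17:ℕ) := pow_le_pow_left₀ (by norm_num) h2e 17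
    have h2 : (Real.exp 1)^(17:ℕ) = Real.exp 17 := by
      rw [← Real.exp_nat_mul]; norm_num
    rw [h2] at h1
    norm_num at h1
    linarith
  have hRbig : (131072:ℝ) ≤ R := by
    rw [← hexpΛ]
    exact hexp17.trans (Real.exp_le_exp.mpr (by linarith))
  have hRoverΛ : (7710:ℝ) * Λ ≤ R := by
    have h1 : 1 + (Λ - 17) ≤ Real.exp (Λ - 17) := by
      have := Real.add_one_le_exp (Λ - 17); linarith
    have h2 : Λ/17 ≤ 1 + (Λ - 17) := by nlinarith
    have h3 : Real.exp 17 * Real.exp (Λ - 17) = R := by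
      rw [← Real.exp_add, ← hexpΛ]; congr 1; ring
    have h4 : 131072 * (Λ/17) ≤ Real.exp 17 * Real.exp (Λ - 17) := by
      apply mul_le_mul hexp17 (h2.trans h1) (by positivity) (by positivity)
    rw [h3] at h4
    linarith
  set n : ℕ := ⌊34*R/Λ⌋₊ with hndef
  have hnle : (n:ℝ) ≤ 34*R/Λ := Nat.floor_le (by positivity)
  have hngt : 34*R/Λ - 1 < (n:ℝ) := Nat.sub_one_lt_floor _
  have hnlb : 33.9*R/Λ ≤ (n:ℝ) := by
    have h1 : (1:ℝ) ≤ 0.1*R/Λ := by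
      rw [le_div_iff₀ hΛpos]
      linarith
    have h2 : 33.9*R/Λ = 34*R/Λ - 0.1*R/Λ := by ring
    linarith
  have hnbigR : (261000:ℝ) ≤ (n:ℝ) := by
    have h1 : (7710:ℝ) ≤ R/Λ := by
      rw [le_div_iff₀ hΛpos]; linarith
    have h2 : 33.9*R/Λ = 33.9*(R/Λ) := by ring
    linarith
  have hn1000 : 1000 ≤ n := by exact_mod_cast (by linarith : (1000:ℝ) ≤ (n:ℝ))
  have hnposR : (0:ℝ) < (n:ℝ) := by linarith
  have hnle2R : (n:ℝ) ≤ 2*R := by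
    have h1 : 34*R/Λ ≤ 2*R := by
      rw [div_le_iff₀ hΛpos]
      have h9 : R*17 ≤ R*Λ := mul_le_mul_of_nonneg_left (by linarith) (by linarith)
      linarith
    linarith
  have hlogn1 : Real.log ((n:ℝ)+1) ≤ Λ + 1 := by
    have h1 : (n:ℝ)+1 ≤ Real.exp 1 * R := by
      have h9 : 2.7*R ≤ Real.exp 1 * R := mul_le_mul_of_nonneg_right he27 (by linarith)
      linarith
    calc Real.log ((n:ℝ)+1) ≤ Real.log (Real.exp 1 * R) :=
          Real.log_le_log (by positivity) h1
      _ = 1 + Λ := by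
          rw [Real.log_mul (by positivity) (ne_of_gt hRpos), Real.log_exp]
      _ = Λ + 1 := by ring
  have hlogn0 : (0:ℝ) ≤ Real.log ((n:ℝ)+1) := by
    apply Real.log_nonneg; linarith
  have hSig : 0 < (6*k) * (2*r-2) := Nat.mul_pos (by omega) (by omega)
  have hSigR : ((6*k*(2*r-2) : ℕ):ℝ) ≤ 12*R := by
    push_cast [Nat.cast_sub (show 2 ≤ 2*r by omega)]
    rw [hR]
    nlinarith [hk7R]
  set DD : ℝ := 4*((6*k*(2*r-2) : ℕ):ℝ)/(n:ℝ) with hDD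
  have hDD0 : 0 ≤ DD := by rw [hDD]; positivity
  have hnΛlb : 33.9*R ≤ (n:ℝ)*Λ := by
    have := (div_le_iff₀ hΛpos).mp hnlb
    linarith
  have hDDle : DD ≤ 1.416*Λ := by
    have h2 : DD ≤ 48*R/(n:ℝ) := by
      rw [hDD, div_le_div_iff₀ hnposR hnposR]
      have h9 := mul_le_mul_of_nonneg_right hSigR (le_of_lt hnposR)
      nlinarith [h9]
    have h3 : 48*R/(n:ℝ) ≤ 1.416*Λ := by
      rw [div_le_iff₀ hnposR]
      nlinarith [hnΛlb]
    linarith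
  set xx : ℝ := DD/(5*(k:ℝ)+1) with hxx
  have hxx0 : 0 ≤ xx := by rw [hxx]; positivity
  have hlogk := log_le_third hk7
  have hΛub : Λ < (7/3)*(k:ℝ) + 2 := by linarith
  have hxxle : xx ≤ 0.722 := by
    rw [hxx, div_le_iff₀ (by positivity)]
    linarith [hDDle, hΛub, hk7R]
  have hxx1' : xx ≤ 1 := by linarith
  set q0 : ℝ := (1-xx)^k with hq0def
  have hq00 : 0 ≤ q0 := by rw [hq0def]; exact pow_nonneg (by linarith) _
  have hq01 : q0 ≤ 1 := by rw [hq0def]; exact pow_le_one₀ (by linarith) (by linarith)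
  have hkxx : (k:ℝ)*xx ≤ 0.2832*Λ := by
    rw [hxx, ← mul_div_assoc, div_le_iff₀ (by positivity)]
    have h9 := mul_le_mul_of_nonneg_left hDDle (by positivity : (0:ℝ) ≤ (k:ℝ))
    nlinarith [h9, hΛpos]
  have hq0l : Real.exp (-(0.5155*Λ)) ≤ q0 := by
    have h1 := one_sub_ge_exp hxx0 hxxle
    have h2 : (Real.exp (-(1.82*xx)))^k ≤ (1-xx)^k :=
      pow_le_pow_left₀ (Real.exp_pos _).le h1 k
    rw [← Real.exp_nat_mul] at h2
    rw [hq0def]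
    refine le_trans (Real.exp_le_exp.mpr ?_) h2
    have h3 : 1.82*((k:ℝ)*xx) ≤ 1.82*(0.2832*Λ) := by linarith [hkxx]
    nlinarith [h3, hΛpos]
  set NE : ℕ := n*n/9 with hNE
  have hq0cond : ∀ 𝒱 : CoverFam n (6*k) (2*r-2), ∀ e ∈ famEW 𝒱,
      (((6*k).choose k : ℕ):ℝ) * q0 ≤ ((((6*k) - (famD 𝒱 e).card).choose k : ℕ):ℝ) := by
    intro 𝒱 e he
    obtain ⟨-, hd⟩ := famEW_facts 𝒱 he
    have hdR : ((famD 𝒱 e).card : ℝ) ≤ DD := by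
      rw [hDD, le_div_iff₀ hnposR]
      calc ((famD 𝒱 e).card:ℝ) * n = ((n * (famD 𝒱 e).card : ℕ):ℝ) := by push_cast; ring
        _ ≤ ((4*(6*k*(2*r-2)) : ℕ):ℝ) := by exact_mod_cast hd
        _ = 4*((6*k*(2*r-2):ℕ):ℝ) := by push_cast; ring
    have hdlt : ((famD 𝒱 e).card : ℝ) < 5*(k:ℝ) := by
      have h1 : DD = xx*(5*(k:ℝ)+1) := by
        rw [hxx, div_mul_cancel₀]
        positivity
      have h9 := mul_le_mul_of_nonneg_right hxxle (by positivity : (0:ℝ) ≤ 5*(k:ℝ)+1)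
      linarith [hdR, h9, hk7R]
    have hdk : (famD 𝒱 e).card + k ≤ 6*k := by
      have h2 : (famD 𝒱 e).card < 5*k := by exact_mod_cast (by push_cast; linarith : ((famD 𝒱 e).card : ℝ) < ((5*k:ℕ):ℝ))
      omega
    have hdx : ((famD 𝒱 e).card : ℝ) ≤ xx * (((6*k:ℕ):ℝ) - k + 1) := by
      have h5 : ((6*k:ℕ):ℝ) - k + 1 = 5*(k:ℝ)+1 := by push_cast; ring
      rw [h5]
      have h1 : DD = xx*(5*(k:ℝ)+1) := by
        rw [hxx, div_mul_cancel₀]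
        positivity
      linarith
    have hcr := choose_ratio (6*k) xx hxx0 hxx1' k (famD 𝒱 e).card hdk hdx
    rw [hq0def]
    exact hcr
  have hglobal : ∃ Lf : Sym2 (Fin n) → KSets (6*k) k,
      ∀ 𝒱 : CoverFam n (6*k) (2*r-2), ∃ e ∈ famEW 𝒱,
        ∀ i ∈ (Lf e).val, ∀ w ∈ (𝒱 i).val, w ∉ e := by
    by_contra hno
    push_neg at hno
    have hsub : (Finset.univ : Finset (Sym2 (Fin n) → KSets (6*k) k))
        ⊆ (Finset.univ : Finset (CoverFam n (6*k) (2*r-2))).biUnion (fun 𝒱 =>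
          Finset.univ.filter (fun Lf : Sym2 (Fin n) → KSets (6*k) k =>
            ∀ e, e ∈ famEW 𝒱 → ∃ i ∈ (Lf e).val, ∃ w ∈ (𝒱 i).val, w ∈ e)) := by
      intro Lf _
      obtain ⟨𝒱, h𝒱⟩ := hno Lf
      exact Finset.mem_biUnion.mpr ⟨𝒱, Finset.mem_univ _,
        Finset.mem_filter.mpr ⟨Finset.mem_univ _, fun e he => h𝒱 e he⟩⟩
    set E : ℕ := Fintype.card (Sym2 (Fin n)) with hE
    set C : ℕ := (6*k).choose k with hCdef
    have hCpos : 0 < C := Nat.choose_pos (by omega)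
    have hcards : ((C:ℝ))^E ≤ (Fintype.card (CoverFam n (6*k) (2*r-2)) : ℝ)
        * (((C:ℝ))^E * (1-q0)^NE) := by
      have h1 : Fintype.card (Sym2 (Fin n) → KSets (6*k) k) = C^E := by
        rw [Fintype.card_fun, card_KSets]
      have h2 := Finset.card_le_card hsub
      have h3 := Finset.card_biUnion_le
        (s := (Finset.univ : Finset (CoverFam n (6*k) (2*r-2))))
        (t := fun 𝒱 => Finset.univ.filter (fun Lf : Sym2 (Fin n) → KSets (6*k) k =>
            ∀ e, e ∈ famEW 𝒱 → ∃ i ∈ (Lf e).val, ∃ w ∈ (𝒱 i).val, w ∈ e))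
      have h5 : C^E ≤ ∑ 𝒱 : CoverFam n (6*k) (2*r-2),
          (Finset.univ.filter (fun Lf : Sym2 (Fin n) → KSets (6*k) k =>
            ∀ e, e ∈ famEW 𝒱 → ∃ i ∈ (Lf e).val, ∃ w ∈ (𝒱 i).val, w ∈ e)).card := by
        calc C^E = Fintype.card (Sym2 (Fin n) → KSets (6*k) k) := h1.symm
          _ = (Finset.univ : Finset (Sym2 (Fin n) → KSets (6*k) k)).card :=
              Finset.card_univ.symm
          _ ≤ _ := (h2.trans h3)
      have h4 : ((C:ℝ))^E ≤ ∑ 𝒱 : CoverFam n (6*k) (2*r-2),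
          ((Finset.univ.filter (fun Lf : Sym2 (Fin n) → KSets (6*k) k =>
            ∀ e, e ∈ famEW 𝒱 → ∃ i ∈ (Lf e).val, ∃ w ∈ (𝒱 i).val, w ∈ e)).card : ℝ) := by
        exact_mod_cast h5
      have h6 : ∀ 𝒱 : CoverFam n (6*k) (2*r-2),
          ((Finset.univ.filter (fun Lf : Sym2 (Fin n) → KSets (6*k) k =>
            ∀ e, e ∈ famEW 𝒱 → ∃ i ∈ (Lf e).val, ∃ w ∈ (𝒱 i).val, w ∈ e)).card : ℝ)
          ≤ ((C:ℝ))^E * (1-q0)^NE := by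
        intro 𝒱
        refine badFam_card_le 𝒱 q0 hq00 hq01 (hq0cond 𝒱) NE ?_
        rw [hNE]
        exact famEW_card hSig hn1000 𝒱
      calc ((C:ℝ))^E ≤ _ := h4
        _ ≤ ∑ _𝒱 : CoverFam n (6*k) (2*r-2), ((C:ℝ))^E * (1-q0)^NE :=
            Finset.sum_le_sum (fun 𝒱 _ => h6 𝒱)
        _ = (Fintype.card (CoverFam n (6*k) (2*r-2)) : ℝ)
            * (((C:ℝ))^E * (1-q0)^NE) := by
            rw [Finset.sum_const, nsmul_eq_mul, Finset.card_univ]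
    have hFam : (Fintype.card (CoverFam n (6*k) (2*r-2)) : ℝ)
        ≤ ((n:ℝ)+1)^((2*r-2)*(6*k)) := by
      have h1 : Fintype.card (CoverFam n (6*k) (2*r-2))
          = (Fintype.card {V : Finset (Fin n) // V.card ≤ 2*r-2})^(6*k) := by
        calc Fintype.card (CoverFam n (6*k) (2*r-2))
            = Fintype.card (Fin (6*k) → {V : Finset (Fin n) // V.card ≤ 2*r-2}) :=
              Fintype.card_congr (Equiv.cast rfl)
          _ = _ := by rw [Fintype.card_fun, Fintype.card_fin]
      have h2 := card_small_subsets_le n (2*r-2)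
      calc (Fintype.card (CoverFam n (6*k) (2*r-2)) : ℝ)
          = (((Fintype.card {V : Finset (Fin n) // V.card ≤ 2*r-2})^(6*k) : ℕ) : ℝ) := by
            rw [h1]
        _ ≤ ((((n+1)^(2*r-2) : ℕ)^(6*k) : ℕ) : ℝ) := by
            exact_mod_cast Nat.pow_le_pow_left h2 (6*k)
        _ = ((n:ℝ)+1)^((2*r-2)*(6*k)) := by
            push_cast
            rw [← pow_mul]
    have hq0ne : (0:ℝ) ≤ 1 - q0 := by linarith
    have hmain : ((n:ℝ)+1)^((2*r-2)*(6*k)) * (1-q0)^NE < 1 := by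
      have hA : ((n:ℝ)+1)^((2*r-2)*(6*k))
          = Real.exp ((((2*r-2)*(6*k) : ℕ):ℝ) * Real.log ((n:ℝ)+1)) := by
        rw [← Real.log_pow, Real.exp_log (by positivity)]
      have hB : (1-q0)^NE ≤ Real.exp (-((NE:ℝ) * q0)) := by
        have h1 : 1 - q0 ≤ Real.exp (-q0) := by
          have := Real.add_one_le_exp (-q0); linarith
        calc (1-q0)^NE ≤ (Real.exp (-q0))^NE := pow_le_pow_left₀ hq0ne h1 NE
          _ = Real.exp ((NE:ℝ) * (-q0)) := by rw [← Real.exp_nat_mul]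
          _ = Real.exp (-((NE:ℝ) * q0)) := by ring_nf
      have hkey : (((2*r-2)*(6*k):ℕ):ℝ) * Real.log ((n:ℝ)+1) < (NE:ℝ) * q0 := by
        have hL1 : (((2*r-2)*(6*k):ℕ):ℝ) ≤ 12*R := by
          push_cast [Nat.cast_sub (show 2 ≤ 2*r by omega)]
          rw [hR]
          nlinarith [hk7R]
        have hL2 : (((2*r-2)*(6*k):ℕ):ℝ) * Real.log ((n:ℝ)+1) ≤ 12*R*(Λ+1) := by
          exact mul_le_mul hL1 hlogn1 hlogn0 (by linarith : (0:ℝ) ≤ 12*R)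
        have hNE1 : ((n:ℝ)*(n:ℝ) - 8)/9 ≤ (NE:ℝ) := by
          have h3 : n*n ≤ 9*NE + 8 := by
            rw [hNE]
            omega
          have h4 : (n:ℝ)*(n:ℝ) ≤ 9*(NE:ℝ) + 8 := by exact_mod_cast h3
          linarith
        have hNE3 : (33.9*R/Λ)*(33.9*R/Λ)/10 ≤ (NE:ℝ) := by
          have h5 : (33.9*R/Λ)*(33.9*R/Λ) ≤ (n:ℝ)*(n:ℝ) := by
            apply mul_le_mul hnlb hnlb (by positivity) (by positivity)
          have h9 : (261000:ℝ)*261000 ≤ (n:ℝ)*(n:ℝ) :=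
            mul_le_mul hnbigR hnbigR (by norm_num) (by linarith)
          linarith [hNE1]
        have hq0NE : Real.exp (-(0.5155*Λ)) * ((33.9*R/Λ)*(33.9*R/Λ)/10)
            ≤ q0 * (NE:ℝ) := by
          apply mul_le_mul hq0l hNE3 (by positivity) hq00
        have hstep : 12*R*(Λ+1) < Real.exp (-(0.5155*Λ)) * ((33.9*R/Λ)*(33.9*R/Λ)/10) :=
          numeric_master hL17 hexpΛ
        calc (((2*r-2)*(6*k):ℕ):ℝ) * Real.log ((n:ℝ)+1) ≤ 12*R*(Λ+1) := hL2
          _ < Real.exp (-(0.5155*Λ)) * ((33.9*R/Λ)*(33.9*R/Λ)/10) := hstep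
          _ ≤ q0 * (NE:ℝ) := hq0NE
          _ = (NE:ℝ) * q0 := by ring
      calc ((n:ℝ)+1)^((2*r-2)*(6*k)) * (1-q0)^NE
          ≤ ((n:ℝ)+1)^((2*r-2)*(6*k)) * Real.exp (-((NE:ℝ) * q0)) := by
            apply mul_le_mul_of_nonneg_left hB (by positivity)
        _ = Real.exp ((((2*r-2)*(6*k):ℕ):ℝ) * Real.log ((n:ℝ)+1) - (NE:ℝ)*q0) := by
            rw [hA, ← Real.exp_add]
            congr 1
            try ring
        _ < 1 := by
            calc Real.exp ((((2*r-2)*(6*k):ℕ):ℝ) * Real.log ((n:ℝ)+1) - (NE:ℝ)*q0)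
                < Real.exp 0 := Real.exp_lt_exp.mpr (by linarith [hkey])
              _ = 1 := Real.exp_zero
    have hCEpos : (0:ℝ) < ((C:ℝ))^E := by
      have : (0:ℝ) < (C:ℝ) := by exact_mod_cast hCpos
      positivity
    have hfinal : (Fintype.card (CoverFam n (6*k) (2*r-2)) : ℝ)
        * (((C:ℝ))^E * (1-q0)^NE) < ((C:ℝ))^E := by
      have h1 : (Fintype.card (CoverFam n (6*k) (2*r-2)) : ℝ)
          * (((C:ℝ))^E * (1-q0)^NE)
          ≤ ((n:ℝ)+1)^((2*r-2)*(6*k)) * (((C:ℝ))^E * (1-q0)^NE) := by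
        apply mul_le_mul_of_nonneg_right hFam
        positivity
      have h2 : ((n:ℝ)+1)^((2*r-2)*(6*k)) * (((C:ℝ))^E * (1-q0)^NE)
          = (((n:ℝ)+1)^((2*r-2)*(6*k)) * (1-q0)^NE) * ((C:ℝ))^E := by ring
      calc (Fintype.card (CoverFam n (6*k) (2*r-2)) : ℝ)
          * (((C:ℝ))^E * (1-q0)^NE) ≤ _ := h1
        _ = (((n:ℝ)+1)^((2*r-2)*(6*k)) * (1-q0)^NE) * ((C:ℝ))^E := h2
        _ < 1 * ((C:ℝ))^E := by
            apply mul_lt_mul_of_pos_right hmain hCEpos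
        _ = ((C:ℝ))^E := by ring
    linarith
  obtain ⟨Lf, hLf⟩ := hglobal
  refine ⟨n, ⟨fun e => (Lf e).val.map ⟨Fin.val, Fin.val_injective⟩, ?_, ?_⟩, ?_⟩
  · intro e _
    rw [Finset.card_map]
    exact (Lf e).2
  · intro c hc
    rw [hasMonoCopy_iff]
    by_contra hnom
    choose V hVcard hVcov using exists_cover c hnom
    set 𝒱 : CoverFam n (6*k) (2*r-2) := fun i => ⟨V (i:ℕ), hVcard _⟩ with h𝒱
    obtain ⟨e, heEW, hmiss⟩ := hLf 𝒱
    have hed : ¬ e.IsDiag := (famEW_facts 𝒱 heEW).1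
    have hce := hc e hed
    rw [Finset.mem_map] at hce
    obtain ⟨i0, hi0mem, hi0val⟩ := hce
    obtain ⟨w, hwV, hwe⟩ := hVcov (c e) e hed rfl
    apply hmiss i0 hi0mem w _ hwe
    show w ∈ (𝒱 i0).val
    have hval : ((i0 : Fin (6*k)):ℕ) = c e := by
      simpa using hi0val
    rw [h𝒱]
    simp only
    rw [hval]
    exact hwV
  · exact hnle

theorem list_ramsey_matching_many_colours (r k : ℕ) (hr : 0 < r) (hk : 0 < k)
    (h0 : 0 < Real.log r) (h1 : Real.log r < 2 * ((k : ℝ) + 1)) :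
    (r : ℝ) * k / (4 * Real.log ((r : ℝ) * k)) ≤ (listRamsey (matchingGraph r) k : ℝ) ∧
    (listRamsey (matchingGraph r) k : ℝ) ≤ 34 * (r : ℝ) * k / Real.log ((r : ℝ) * k) := by
  classical
  have hr2 : 2 ≤ r := by
    by_contra h
    push_neg at h
    have hle1 : (r:ℝ) ≤ 1 := by exact_mod_cast (by omega : r ≤ 1)
    have := Real.log_nonpos (by positivity) hle1
    linarith
  have hk1 : 1 ≤ k := hk
  have hr3 : (2:ℝ) ≤ (r:ℝ) := by exact_mod_cast hr2
  have hk3 : (1:ℝ) ≤ (k:ℝ) := by exact_mod_cast hk1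
  have hΛpos : 0 < Real.log ((r:ℝ)*k) := by
    apply Real.log_pos
    nlinarith
  have hupper : (listRamsey (matchingGraph r) k : ℝ)
      ≤ 34 * (r:ℝ) * k / Real.log ((r:ℝ)*k) := by
    by_cases hcase : Real.log ((r:ℝ)*k) ≤ 17
    · have hmem := det_mem r k hr2 hk1
      have hle : listRamsey (matchingGraph r) k ≤ 2*(r-1)*k + 2 := by
        rw [listRamsey_eq]
        exact Nat.sInf_le hmem
      have hcast : ((2*(r-1)*k + 2 : ℕ):ℝ) = 2*((r:ℝ)-1)*k + 2 := by
        push_cast [Nat.cast_sub (by omega : 1 ≤ r)]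
        ring
      have h2 : (listRamsey (matchingGraph r) k : ℝ) ≤ 2*((r:ℝ)-1)*k + 2 := by
        rw [← hcast]
        exact_mod_cast hle
      have h3 : 2*((r:ℝ)-1)*k + 2 ≤ 34*(r:ℝ)*k/Real.log ((r:ℝ)*k) := by
        rw [le_div_iff₀ hΛpos]
        have h4 : (2*((r:ℝ)-1)*k + 2) * Real.log ((r:ℝ)*k) ≤ (2*((r:ℝ)-1)*k + 2) * 17 := by
          apply mul_le_mul_of_nonneg_left hcase
          nlinarith
        nlinarith
      linarith
    · push_neg at hcase
      have hk7 : 7 ≤ k := by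
        by_contra h
        push_neg at h
        have hk6 : (k:ℝ) ≤ 6 := by exact_mod_cast (by omega : k ≤ 6)
        have hlogsplit : Real.log ((r:ℝ)*k) = Real.log r + Real.log k := by
          rw [Real.log_mul (by positivity) (by positivity)]
        have hlk : Real.log (k:ℝ) ≤ Real.log 6 := Real.log_le_log (by positivity) hk6
        have hlog6 : Real.log 6 ≤ 3 := by
          rw [Real.log_le_iff_le_exp (by norm_num)]
          have h5 : (2.7:ℝ)^(3:ℕ) ≤ (Real.exp 1)^(3:ℕ) :=
            pow_le_pow_left₀ (by norm_num) (by nlinarith [Real.exp_one_gt_d9]) 3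
          have h6 : (Real.exp 1)^(3:ℕ) = Real.exp 3 := by
            rw [← Real.exp_nat_mul]; norm_num
          rw [h6] at h5
          norm_num at h5
          linarith
        have hcontr : Real.log ((r:ℝ)*k) < 17 := by
          rw [hlogsplit]
          have h7 : 2*((k:ℝ)+1) ≤ 14 := by linarith
          linarith [h1, hlk, hlog6]
        linarith
      have hLk : Real.log ((r:ℝ)*k) < 2*((k:ℝ)+1) + Real.log k := by
        rw [Real.log_mul (by positivity) (by positivity)]
        linarith [h1]
      obtain ⟨N, hNmem, hNle⟩ := prob_in_set r k hr2 hk7 hcase hLk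
      have hle : listRamsey (matchingGraph r) k ≤ N := by
        rw [listRamsey_eq]
        exact Nat.sInf_le hNmem
      have hle2 : (listRamsey (matchingGraph r) k : ℝ) ≤ (N:ℝ) := by exact_mod_cast hle
      calc (listRamsey (matchingGraph r) k : ℝ) ≤ (N:ℝ) := hle2
        _ ≤ 34*((r:ℝ)*k)/Real.log ((r:ℝ)*k) := hNle
        _ = 34*(r:ℝ)*k/Real.log ((r:ℝ)*k) := by ring
  refine ⟨?_, hupper⟩
  have hne : (RSet (matchingGraph r) k).Nonempty := ⟨_, det_mem r k hr2 hk1⟩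
  have hmem : listRamsey (matchingGraph r) k ∈ RSet (matchingGraph r) k := by
    rw [listRamsey_eq]
    exact Nat.sInf_mem hne
  by_contra hcon
  push_neg at hcon
  exact lower_aux r k hr2 hk1 _ hcon hmem
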